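/- Let f(z) = z - ∑_{n=2}^∞ a_n z^n be analytic on the unit disc with a_n ≥ 0, f_m(z) = z - ∑_{n=2}^m a_n z^n its m-th partial sum, and let δ_n satisfy δ_n ≥ 1 for 2 ≤ n ≤ m and δ_n ≥ δ_{m+1} > 1 for n ≥ m+1. If ∑_{n=2}^∞ δ_n a_n ≤ 1, then for all z in the unit disc, Re(f(z)/f_m(z)) ≥ 1 - 1/δ_{m+1}. -/

import Mathlib

theorem re_f_div_fm (m : ℕ) (hm : 1 ≤ m) (a δ : ℕ → ℝ)
    (ha : ∀ n, 2 ≤ n → 0 ≤ a n)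
    (hδ1 : ∀ n, 2 ≤ n → n ≤ m → 1 ≤ δ n)
    (hδ2 : ∀ n, m + 1 ≤ n → δ (m + 1) ≤ δ n)
    (hδm : 1 < δ (m + 1))
    (hsum : Summable (fun n : ℕ => δ (n + 2) * a (n + 2)))
    (hle : (∑' n : ℕ, δ (n + 2) * a (n + 2)) ≤ 1)
    (f fm : ℂ → ℂ)
    (hf : ∀ z : ℂ, f z = z - ∑' n : ℕ, (a (n + 2) : ℂ) * z ^ (n + 2))
    (hfm : ∀ z : ℂ, fm z = z - ∑ n ∈ Finset.Icc 2 m, (a n : ℂ) * z ^ n) :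
    ∀ z : ℂ, ‖z‖ < 1 → fm z ≠ 0 →
      1 - 1 / δ (m + 1) ≤ (f z / fm z).re := by
  intro z hz hfm0
  set r := ‖z‖ with hrdef
  have hr0 : 0 ≤ r := norm_nonneg z
  have hr1 : r ≤ 1 := le_of_lt hz
  -- δ n ≥ 1 for all n ≥ 2
  have hd1 : ∀ n, 2 ≤ n → 1 ≤ δ n := by
    intro n hn
    rcases le_or_gt n m with h | h
    · exact hδ1 n hn h
    · exact le_trans (le_of_lt hδm) (hδ2 n (by omega))
  have hg0 : ∀ n : ℕ, 0 ≤ δ (n + 2) * a (n + 2) :=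
    fun n => mul_nonneg (le_trans zero_le_one (hd1 _ (by omega))) (ha _ (by omega))
  have hrp : ∀ n : ℕ, r ^ (n + 2) ≤ 1 := fun n => pow_le_one₀ hr0 hr1
  -- summability
  have hule : ∀ n : ℕ, a (n + 2) * r ^ (n + 2) ≤ δ (n + 2) * a (n + 2) := by
    intro n
    calc a (n + 2) * r ^ (n + 2) ≤ a (n + 2) * 1 :=
          mul_le_mul_of_nonneg_left (hrp n) (ha _ (by omega))
      _ = 1 * a (n + 2) := by ring
      _ ≤ δ (n + 2) * a (n + 2) :=
          mul_le_mul_of_nonneg_right (hd1 _ (by omega)) (ha _ (by omega))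
  have hu0 : ∀ n : ℕ, 0 ≤ a (n + 2) * r ^ (n + 2) :=
    fun n => mul_nonneg (ha _ (by omega)) (pow_nonneg hr0 _)
  have hv0 : ∀ n : ℕ, 0 ≤ δ (n + 2) * a (n + 2) * r ^ (n + 2) :=
    fun n => mul_nonneg (hg0 n) (pow_nonneg hr0 _)
  have Su : Summable (fun n : ℕ => a (n + 2) * r ^ (n + 2)) :=
    hsum.of_nonneg_of_le hu0 hule
  have Sv : Summable (fun n : ℕ => δ (n + 2) * a (n + 2) * r ^ (n + 2)) :=
    hsum.of_nonneg_of_le hv0 (fun n => by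
      calc δ (n + 2) * a (n + 2) * r ^ (n + 2) ≤ δ (n + 2) * a (n + 2) * 1 :=
            mul_le_mul_of_nonneg_left (hrp n) (hg0 n)
        _ = δ (n + 2) * a (n + 2) := by ring)
  have hnormw : ∀ n : ℕ, ‖(a (n + 2) : ℂ) * z ^ (n + 2)‖ = a (n + 2) * r ^ (n + 2) := by
    intro n
    rw [norm_mul, norm_pow, Complex.norm_real, Real.norm_eq_abs,
      abs_of_nonneg (ha _ (by omega))]
  have Sw : Summable (fun n : ℕ => (a (n + 2) : ℂ) * z ^ (n + 2)) := by
    apply Summable.of_norm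
    simpa only [hnormw] using Su
  -- ∑' v ≤ r
  have hvr : ∀ n : ℕ, δ (n + 2) * a (n + 2) * r ^ (n + 2) ≤ δ (n + 2) * a (n + 2) * r := by
    intro n
    rcases eq_or_lt_of_le hr0 with h | h
    · simp [← h]
    · exact mul_le_mul_of_nonneg_left (pow_le_of_le_one hr0 hr1 (by omega)) (hg0 n)
  have hSvr : (∑' n : ℕ, δ (n + 2) * a (n + 2) * r ^ (n + 2)) ≤ r := by
    calc (∑' n : ℕ, δ (n + 2) * a (n + 2) * r ^ (n + 2))
        ≤ ∑' n : ℕ, δ (n + 2) * a (n + 2) * r :=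
          Summable.tsum_le_tsum hvr Sv (hsum.mul_right r)
      _ = (∑' n : ℕ, δ (n + 2) * a (n + 2)) * r := by rw [tsum_mul_right]
      _ ≤ 1 * r := mul_le_mul_of_nonneg_right hle hr0
      _ = r := one_mul r
  -- rewrite finite Icc sums as range sums
  have hIcc : ∀ (F : ℕ → ℂ), ∑ n ∈ Finset.Icc 2 m, F n = ∑ i ∈ Finset.range (m - 1), F (i + 2) := by
    intro F
    rw [← Finset.Ico_add_one_right_eq_Icc, Finset.sum_Ico_eq_sum_range]
    have h2 : m + 1 - 2 = m - 1 := by omega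
    rw [h2]
    exact Finset.sum_congr rfl (fun i _ => by rw [Nat.add_comm])
  have hIccR : ∀ (F : ℕ → ℝ), ∑ n ∈ Finset.Icc 2 m, F n = ∑ i ∈ Finset.range (m - 1), F (i + 2) := by
    intro F
    rw [← Finset.Ico_add_one_right_eq_Icc, Finset.sum_Ico_eq_sum_range]
    have h2 : m + 1 - 2 = m - 1 := by omega
    rw [h2]
    exact Finset.sum_congr rfl (fun i _ => by rw [Nat.add_comm])
  -- z ≠ 0
  have hz0 : z ≠ 0 := by
    rintro rfl
    apply hfm0
    rw [hfm]
    rw [Finset.sum_eq_zero]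
    · simp
    · intro n hn
      rw [Finset.mem_Icc] at hn
      rw [zero_pow (by omega : n ≠ 0), mul_zero]
  have hrpos : 0 < r := norm_pos_iff.mpr hz0
  -- split sums at m - 1
  set k := m - 1 with hk
  have hk2 : ∀ i : ℕ, i + k + 2 = i + (m + 1) := by intro i; omega
  -- finite parts
  set Fδ := ∑ i ∈ Finset.range k, δ (i + 2) * a (i + 2) * r ^ (i + 2) with hFδ
  set F := ∑ i ∈ Finset.range k, a (i + 2) * r ^ (i + 2) with hF
  have hFFδ : F ≤ Fδ := by
    apply Finset.sum_le_sum
    intro i _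
    exact mul_le_mul_of_nonneg_right
      (le_mul_of_one_le_left (ha _ (by omega)) (hd1 _ (by omega))) (pow_nonneg hr0 _)
  -- tail sums
  have Svk : Summable (fun i : ℕ => δ (i + k + 2) * a (i + k + 2) * r ^ (i + k + 2)) := by
    have := (summable_nat_add_iff k).mpr Sv
    exact this
  have Suk : Summable (fun i : ℕ => a (i + k + 2) * r ^ (i + k + 2)) := by
    have := (summable_nat_add_iff k).mpr Su
    exact this
  have hsplitv : Fδ + (∑' i : ℕ, δ (i + k + 2) * a (i + k + 2) * r ^ (i + k + 2))
      = ∑' n : ℕ, δ (n + 2) * a (n + 2) * r ^ (n + 2) := by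
    simpa using Summable.sum_add_tsum_nat_add k Sv
  have hTtail : (∑' i : ℕ, δ (i + k + 2) * a (i + k + 2) * r ^ (i + k + 2)) ≤ r - Fδ := by
    have := hSvr
    rw [← hsplitv] at this
    linarith
  -- lower bound on |fm z|
  have hPz : (∑ n ∈ Finset.Icc 2 m, (a n : ℂ) * z ^ n)
      = ∑ i ∈ Finset.range k, (a (i + 2) : ℂ) * z ^ (i + 2) := hIcc _
  have hPzle : ‖∑ i ∈ Finset.range k, (a (i + 2) : ℂ) * z ^ (i + 2)‖ ≤ F := by
    calc ‖∑ i ∈ Finset.range k, (a (i + 2) : ℂ) * z ^ (i + 2)‖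
        ≤ ∑ i ∈ Finset.range k, ‖(a (i + 2) : ℂ) * z ^ (i + 2)‖ :=
          norm_sum_le _ _
      _ = F := Finset.sum_congr rfl (fun i _ => hnormw i)
  have hfmlb : r - F ≤ ‖fm z‖ := by
    rw [hfm, hPz]
    calc r - F ≤ ‖z‖ - ‖∑ i ∈ Finset.range k, (a (i + 2) : ℂ) * z ^ (i + 2)‖ := by
          exact sub_le_sub (le_refl _) hPzle
      _ ≤ ‖z - ∑ i ∈ Finset.range k, (a (i + 2) : ℂ) * z ^ (i + 2)‖ := norm_sub_norm_le _ _
  -- f z - fm z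
  have hsplitw : (∑ i ∈ Finset.range k, (a (i + 2) : ℂ) * z ^ (i + 2))
      + (∑' i : ℕ, (a (i + k + 2) : ℂ) * z ^ (i + k + 2))
      = ∑' n : ℕ, (a (n + 2) : ℂ) * z ^ (n + 2) := by
    simpa using Summable.sum_add_tsum_nat_add k Sw
  have hdiff : f z - fm z = -(∑' i : ℕ, (a (i + k + 2) : ℂ) * z ^ (i + k + 2)) := by
    rw [hf, hfm, hPz, ← hsplitw]
    ring
  have Swk : Summable (fun i : ℕ => (a (i + k + 2) : ℂ) * z ^ (i + k + 2)) := by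
    have := (summable_nat_add_iff k).mpr Sw
    exact this
  have hdiffle : ‖f z - fm z‖ ≤ ∑' i : ℕ, a (i + k + 2) * r ^ (i + k + 2) := by
    have Snorm : Summable (fun i : ℕ => ‖(a (i + k + 2) : ℂ) * z ^ (i + k + 2)‖) :=
      Suk.congr (fun i => (hnormw (i + k)).symm)
    rw [hdiff, norm_neg]
    calc ‖∑' i : ℕ, (a (i + k + 2) : ℂ) * z ^ (i + k + 2)‖
        ≤ ∑' i : ℕ, ‖(a (i + k + 2) : ℂ) * z ^ (i + k + 2)‖ :=
          norm_tsum_le_tsum_norm Snorm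
      _ = ∑' i : ℕ, a (i + k + 2) * r ^ (i + k + 2) :=
          tsum_congr (fun i => hnormw _)
  -- multiply by δ (m+1)
  have hδpos : 0 < δ (m + 1) := lt_trans one_pos hδm
  have hmul : δ (m + 1) * (∑' i : ℕ, a (i + k + 2) * r ^ (i + k + 2))
      ≤ ∑' i : ℕ, δ (i + k + 2) * a (i + k + 2) * r ^ (i + k + 2) := by
    rw [← tsum_mul_left]
    apply Summable.tsum_le_tsum _ (Suk.mul_left _) Svk
    intro i
    have h1 : δ (m + 1) ≤ δ (i + k + 2) := hδ2 _ (by omega)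
    have h2 : (0:ℝ) ≤ a (i + k + 2) * r ^ (i + k + 2) :=
      mul_nonneg (ha _ (by omega)) (pow_nonneg hr0 _)
    calc δ (m + 1) * (a (i + k + 2) * r ^ (i + k + 2))
        ≤ δ (i + k + 2) * (a (i + k + 2) * r ^ (i + k + 2)) :=
          mul_le_mul_of_nonneg_right h1 h2
      _ = δ (i + k + 2) * a (i + k + 2) * r ^ (i + k + 2) := by ring
  -- key bound: δ(m+1) * |f z - fm z| ≤ |fm z|
  have hkey : δ (m + 1) * ‖f z - fm z‖ ≤ ‖fm z‖ := by
    calc δ (m + 1) * ‖f z - fm z‖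
        ≤ δ (m + 1) * ∑' i : ℕ, a (i + k + 2) * r ^ (i + k + 2) :=
          mul_le_mul_of_nonneg_left hdiffle (le_of_lt hδpos)
      _ ≤ ∑' i : ℕ, δ (i + k + 2) * a (i + k + 2) * r ^ (i + k + 2) := hmul
      _ ≤ r - Fδ := hTtail
      _ ≤ r - F := by linarith
      _ ≤ ‖fm z‖ := hfmlb
  -- conclude
  have habsfm : 0 < ‖fm z‖ := norm_pos_iff.mpr hfm0
  have hq : ‖(f z - fm z) / fm z‖ ≤ 1 / δ (m + 1) := by
    rw [norm_div, div_le_div_iff₀ habsfm hδpos]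
    linarith [hkey]
  have hre : (f z / fm z).re = 1 + ((f z - fm z) / fm z).re := by
    have : f z / fm z = 1 + (f z - fm z) / fm z := by field_simp; ring
    rw [this, Complex.add_re, Complex.one_re]
  rw [hre]
  have := Complex.abs_re_le_norm ((f z - fm z) / fm z)
  have h3 := neg_abs_le (((f z - fm z) / fm z).re)
  have h4 : -(1 / δ (m + 1)) ≤ ((f z - fm z) / fm z).re := by
    rw [abs_le] at *
    linarith [this]
  linarith
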